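/- Free groups of finite rank are Hopfian: every surjective endomorphism of a finitely generated free group is an automorphism. -/

import Mathlib

section Aux

variable {n : ℕ}

/-- The partial shift function associated to a generator `j` and a word `L`. -/
def sigmaFun (L : List (Fin n × Bool)) (j : Fin n) (p : Fin (L.length + 1)) :
    Fin (L.length + 1) :=
  if h : p.val < L.length ∧ L.getD p.val (j, true) = (j, false) then ⟨p.val + 1, by omega⟩
  else if h2 : p.val ≠ 0 ∧ L.getD (p.val - 1) (j, true) = (j, true) then
    ⟨p.val - 1, by omega⟩
  else p

/-- The domain on which `sigmaFun` is the intended partial injection. -/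
def sigmaDom (L : List (Fin n × Bool)) (j : Fin n) : Set (Fin (L.length + 1)) :=
  {p | (p.val < L.length ∧ L.getD p.val (j, true) = (j, false)) ∨
    (p.val ≠ 0 ∧ L.getD (p.val - 1) (j, true) = (j, true))}

/-- The reduced word of a free group element has no adjacent cancelling pair. -/
lemma toWord_reduced (w : FreeGroup (Fin n)) (m : ℕ) (h : m + 1 < w.toWord.length)
    (x : Fin n) (b : Bool) (h1 : w.toWord[m]'(by omega) = (x, b)) :
    w.toWord[m + 1]'h ≠ (x, !b) := by
  intro h2
  apply FreeGroup.reduce.not (L₁ := w.toWord) (L₂ := w.toWord.take m)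
    (L₃ := w.toWord.drop (m + 2)) (x := x) (b := b)
  rw [FreeGroup.reduce_toWord]
  conv_lhs => rw [← List.take_append_drop m w.toWord]
  congr 1
  rw [List.drop_eq_getElem_cons (by omega : m < w.toWord.length), h1,
    List.drop_eq_getElem_cons (by omega : m + 1 < w.toWord.length), h2]

theorem freeGroup_separate (w : FreeGroup (Fin n)) (hw : w ≠ 1) :
    ∃ (k : ℕ) (φ : FreeGroup (Fin n) →* Equiv.Perm (Fin (k + 1))), φ w ≠ 1 := by
  classical
  set L := w.toWord with hL
  have hred : ∀ (m : ℕ) (h : m + 1 < L.length) (x : Fin n) (b : Bool),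
      L[m]'(by omega) = (x, b) → L[m + 1]'h ≠ (x, !b) := toWord_reduced w
  have hLne : L ≠ [] := by
    simpa [hL, FreeGroup.toWord_eq_nil_iff] using hw
  have hlen : L.length ≠ 0 := by simpa using hLne
  refine ⟨L.length, ?_⟩
  -- Build the permutations extending the partial injections.
  have hinj : ∀ j : Fin n, Set.InjOn (sigmaFun L j) (sigmaDom L j) := by
    intro j p hp q hq heq
    have hp' := hp
    have hq' := hq
    unfold sigmaDom at hp' hq'
    simp only [Set.mem_setOf_eq] at hp' hq'
    by_cases h1 : p.val < L.length ∧ L.getD p.val (j, true) = (j, false) <;>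
      by_cases h2 : q.val < L.length ∧ L.getD q.val (j, true) = (j, false)
    · -- both in branch 1
      unfold sigmaFun at heq
      rw [dif_pos h1, dif_pos h2] at heq
      have hval := congrArg Fin.val heq
      simp only at hval
      exact Fin.ext (by omega)
    · -- p in branch 1, q in branch 2
      have h3 : q.val ≠ 0 ∧ L.getD (q.val - 1) (j, true) = (j, true) := hq'.resolve_left h2
      unfold sigmaFun at heq
      rw [dif_pos h1, dif_neg h2, dif_pos h3] at heq
      have hval := congrArg Fin.val heq
      simp only at hval
      exfalso
      have hqlt : q.val ≤ L.length := by omega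
      have hq1 : q.val - 1 = p.val + 1 := by omega
      have e1 : L[p.val]'(by omega) = (j, false) := by
        have := h1.2; rwa [List.getD_eq_getElem L _ (by omega)] at this
      have e2 : L[p.val + 1]'(by omega) = (j, true) := by
        have := h3.2; rw [hq1] at this
        rwa [List.getD_eq_getElem L _ (by omega)] at this
      exact hred p.val (by omega) j false e1 (by simpa using e2)
    · -- p in branch 2, q in branch 1
      have h3 : p.val ≠ 0 ∧ L.getD (p.val - 1) (j, true) = (j, true) := hp'.resolve_left h1
      unfold sigmaFun at heq
      rw [dif_neg h1, dif_pos h3, dif_pos h2] at heq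
      have hval := congrArg Fin.val heq
      simp only at hval
      exfalso
      have hplt : p.val ≤ L.length := by omega
      have hp1 : p.val - 1 = q.val + 1 := by omega
      have e1 : L[q.val]'(by omega) = (j, false) := by
        have := h2.2; rwa [List.getD_eq_getElem L _ (by omega)] at this
      have e2 : L[q.val + 1]'(by omega) = (j, true) := by
        have := h3.2; rw [hp1] at this
        rwa [List.getD_eq_getElem L _ (by omega)] at this
      exact hred q.val (by omega) j false e1 (by simpa using e2)
    · -- both in branch 2
      have h3 : p.val ≠ 0 ∧ L.getD (p.val - 1) (j, true) = (j, true) := hp'.resolve_left h1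
      have h4 : q.val ≠ 0 ∧ L.getD (q.val - 1) (j, true) = (j, true) := hq'.resolve_left h2
      unfold sigmaFun at heq
      rw [dif_neg h1, dif_pos h3, dif_neg h2, dif_pos h4] at heq
      have hval := congrArg Fin.val heq
      simp only at hval
      have := h3.1; have := h4.1
      exact Fin.ext (by omega)
  have hσ : ∀ j : Fin n, ∃ σ : Equiv.Perm (Fin (L.length + 1)),
      ∀ p ∈ sigmaDom L j, σ p = sigmaFun L j p := by
    intro j
    obtain ⟨g, hg⟩ := Set.MapsTo.exists_equiv_extend_of_card_eq
      (t := (Finset.univ : Finset (Fin (L.length + 1))))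
      (by simp) (fun x _ => Finset.mem_univ _) (hinj j)
    exact ⟨g.trans (Equiv.subtypeUnivEquiv fun x => Finset.mem_univ x),
      fun p hp => hg p hp⟩
  choose σ hσ using hσ
  refine ⟨FreeGroup.lift σ, ?_⟩
  -- step facts
  have step_false : ∀ (t : ℕ) (ht : t < L.length) (j : Fin n),
      L[t]'ht = (j, false) → σ j ⟨t, by omega⟩ = ⟨t + 1, by omega⟩ := by
    intro t ht j hLt
    have hmem : (⟨t, by omega⟩ : Fin (L.length + 1)) ∈ sigmaDom L j := by
      left
      exact ⟨ht, by rw [List.getD_eq_getElem L _ ht]; exact hLt⟩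
    rw [hσ j _ hmem]
    unfold sigmaFun
    rw [dif_pos ⟨ht, by rw [List.getD_eq_getElem L _ ht]; exact hLt⟩]
  have step_true : ∀ (t : ℕ) (ht : t < L.length) (j : Fin n),
      L[t]'ht = (j, true) → σ j ⟨t + 1, by omega⟩ = ⟨t, by omega⟩ := by
    intro t ht j hLt
    have hc2 : (t + 1 : ℕ) ≠ 0 ∧ L.getD (t + 1 - 1) (j, true) = (j, true) := by
      refine ⟨by omega, ?_⟩
      simp only [Nat.add_sub_cancel]
      rw [List.getD_eq_getElem L _ ht]
      exact hLt
    have hmem : (⟨t + 1, by omega⟩ : Fin (L.length + 1)) ∈ sigmaDom L j := Or.inr hc2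
    rw [hσ j _ hmem]
    unfold sigmaFun
    have hnc1 : ¬((t + 1 : ℕ) < L.length ∧ L.getD (t + 1) (j, true) = (j, false)) := by
      rintro ⟨h1, h2⟩
      rw [List.getD_eq_getElem L _ h1] at h2
      exact hred t (by omega) j true hLt (by simpa using h2)
    rw [dif_neg hnc1, dif_pos hc2]
    exact Fin.ext (by simp)
  -- The key computation
  have key : ∀ (d t : ℕ), ∀ _ : t + d = L.length,
      (((L.drop t).map fun x => cond x.2 (σ x.1) (σ x.1)⁻¹).prod)
        ⟨L.length, by omega⟩ = ⟨t, by omega⟩ := by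
    intro d
    induction d with
    | zero =>
      intro t ht
      have : t = L.length := by omega
      subst this
      simp [List.drop_length]
    | succ d ih =>
      intro t ht
      have htl : t < L.length := by omega
      rw [List.drop_eq_getElem_cons htl, List.map_cons, List.prod_cons,
        Equiv.Perm.mul_apply, ih (t + 1) (by omega)]
      rcases hLt : L[t]'htl with ⟨j, b⟩
      cases b with
      | false =>
        simp only [cond_false]
        rw [Equiv.Perm.inv_eq_iff_eq]
        exact (step_false t htl j hLt).symm
      | true =>
        simp only [cond_true]
        exact step_true t htl j hLt
  have hww : FreeGroup.lift σ w =
      ((L.map fun x => cond x.2 (σ x.1) (σ x.1)⁻¹).prod) := by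
    conv_lhs => rw [← FreeGroup.mk_toWord (x := w)]
    exact FreeGroup.lift_mk
  intro hone
  have := key L.length 0 (by omega)
  rw [List.drop_zero] at this
  rw [← hww, hone] at this
  simp only [Equiv.Perm.one_apply] at this
  exact hlen (by simpa using congrArg Fin.val this)

end Aux

/-- Free groups of finite rank are Hopfian: every surjective endomorphism of a finitely
generated free group is an automorphism (i.e. bijective). -/
theorem freeGroup_hopfian (n : ℕ) (f : FreeGroup (Fin n) →* FreeGroup (Fin n))
    (hf : Function.Surjective f) : Function.Bijective f := by
  refine ⟨?_, hf⟩
  have hker : ∀ w, f w = 1 → w = 1 := by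
    intro w hw1
    by_contra hw
    obtain ⟨k, φ, hφ⟩ := freeGroup_separate w hw
    have hfin : Finite (FreeGroup (Fin n) →* Equiv.Perm (Fin (k + 1))) :=
      Finite.of_equiv _ FreeGroup.lift
    set T : (FreeGroup (Fin n) →* Equiv.Perm (Fin (k + 1))) →
        (FreeGroup (Fin n) →* Equiv.Perm (Fin (k + 1))) := fun ψ => ψ.comp f with hT
    have hTinj : Function.Injective T := by
      intro a b hab
      refine MonoidHom.ext fun x => ?_
      obtain ⟨y, rfl⟩ := hf x
      exact DFunLike.congr_fun hab y
    obtain ⟨ψ, hψ⟩ := Finite.injective_iff_surjective.mp hTinj φ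
    apply hφ
    rw [← hψ]
    show ψ (f w) = 1
    rw [hw1, map_one]
  intro a b hab
  have := hker (a * b⁻¹) (by rw [map_mul, map_inv, hab, mul_inv_cancel])
  exact mul_inv_eq_one.mp this
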